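/- Let V be a nonzero module of the Virasoro algebra on which C acts as a scalar c, such that V is the direct sum of the generalized eigenspaces of L_0, and such that there exists an eigenvalue h₀ with nonzero generalized eigenspace whose real part is minimal (Re h₀ ≤ Re λ for every eigenvalue λ with nonzero generalized eigenspace). Then V contains a nonzero singular vector, and hence a submodule which is a lowest weight module. -/
import Mathlib


/-- A representation of the Virasoro algebra on a complex vector space `V`:
a family of operators `L n` (`n : ℤ`) and an operator `C` satisfying the Virasoro
commutation relations
`[L m, L n] = (n - m) L (m+n) + (C/12)(n³ - n) δ_{m+n,0}` and `[C, L n] = 0`. -/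
structure VirasoroRep (V : Type) [AddCommGroup V] [Module ℂ V] where
  L : ℤ → Module.End ℂ V
  C : Module.End ℂ V
  comm_LL : ∀ m n : ℤ, L m * L n - L n * L m =
      ((n : ℂ) - (m : ℂ)) • L (m + n) +
        (if m + n = 0 then (((n : ℂ) ^ 3 - (n : ℂ)) / 12) else 0) • C
  comm_CL : ∀ n : ℤ, C * L n - L n * C = 0

namespace VirasoroRep

variable {V W : Type} [AddCommGroup V] [Module ℂ V] [AddCommGroup W] [Module ℂ W]

/-- `v` is a singular vector of weight `(h, c)`: it is annihilated by all `L (-n)`, `n ≥ 1`,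
and is an eigenvector of `L 0` and `C` with eigenvalues `h` resp. `c`. -/
def IsSingular (ρ : VirasoroRep V) (h c : ℂ) (v : V) : Prop :=
  (∀ n : ℤ, 1 ≤ n → ρ.L (-n) v = 0) ∧ ρ.L 0 v = h • v ∧ ρ.C v = c • v

/-- A linear subspace invariant under the Virasoro action, i.e. an `𝔏`-submodule. -/
def Invariant (ρ : VirasoroRep V) (p : Submodule ℂ V) : Prop :=
  (∀ n : ℤ, ∀ x ∈ p, ρ.L n x ∈ p) ∧ ∀ x ∈ p, ρ.C x ∈ p

/-- The `𝔏`-submodule `U(𝔏)·v` generated by a vector `v`: the smallest invariant subspace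
containing `v`. -/
def gen (ρ : VirasoroRep V) (v : V) : Submodule ℂ V :=
  sInf {p : Submodule ℂ V | ρ.Invariant p ∧ v ∈ p}

/-- The vector `v` generates the module: `U(𝔏)·v` is everything. -/
def Generates (ρ : VirasoroRep V) (v : V) : Prop :=
  ∀ p : Submodule ℂ V, ρ.Invariant p → v ∈ p → p = ⊤

/-- A homomorphism of Virasoro modules: a linear map intertwining the actions. -/
def IsHom (ρ : VirasoroRep V) (σ : VirasoroRep W) (f : V →ₗ[ℂ] W) : Prop :=
  (∀ (n : ℤ) (x : V), f (ρ.L n x) = σ.L n (f x)) ∧ ∀ x : V, f (ρ.C x) = σ.C (f x)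

end VirasoroRep

/-- A nonzero Virasoro module on which `C` acts as the scalar `c`, which is the direct sum of
the generalized eigenspaces of `L 0`, and which has an eigenvalue `h₀` (with nonzero
generalized eigenspace) of minimal real part, contains a nonzero singular vector — and hence a
submodule which is a lowest weight module. -/
theorem virasoro_module_has_singular_vector
    (V : Type) [AddCommGroup V] [Module ℂ V] (ρ : VirasoroRep V) (c : ℂ)
    (hC : ∀ x : V, ρ.C x = c • x)
    (hne : ∃ x : V, x ≠ 0)
    (hsum : ⨆ μ : ℂ, Module.End.maxGenEigenspace (ρ.L 0) μ = ⊤)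
    (h₀ : ℂ) (h₀ne : Module.End.maxGenEigenspace (ρ.L 0) h₀ ≠ ⊥)
    (h₀min : ∀ μ : ℂ, Module.End.maxGenEigenspace (ρ.L 0) μ ≠ ⊥ → h₀.re ≤ μ.re) :
    ∃ v : V, v ≠ 0 ∧ ∃ h' : ℂ, ρ.IsSingular h' c v := by
  -- pick a nonzero x in the generalized eigenspace of h₀
  obtain ⟨x, hx_mem, hx_ne⟩ := (Submodule.ne_bot_iff _).mp h₀ne
  rw [Module.End.mem_maxGenEigenspace] at hx_mem
  obtain ⟨k, hk⟩ := hx_mem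
  -- key commutation: (L0 - (h₀ - n)) ∘ L(-n) = L(-n) ∘ (L0 - h₀) for n ≠ 0
  have key : ∀ n : ℤ, n ≠ 0 →
      (ρ.L 0 - (h₀ - (n : ℂ)) • 1) * ρ.L (-n) = ρ.L (-n) * (ρ.L 0 - h₀ • 1) := by
    intro n hn
    have h1 := ρ.comm_LL 0 (-n)
    rw [if_neg (by simpa using hn)] at h1
    push_cast at h1
    have h1' : ρ.L 0 * ρ.L (-n) - ρ.L (-n) * ρ.L 0 = (-(n:ℂ)) • ρ.L (-n) := by
      simpa using h1
    ext w
    have hw := LinearMap.congr_fun h1' w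
    simp only [LinearMap.sub_apply, Module.End.mul_apply, LinearMap.smul_apply,
      Module.End.one_apply, map_sub, map_smul, LinearMap.coe_comp, Function.comp_apply] at hw ⊢
    linear_combination (norm := module) hw
  -- L(-n) kills every generalized eigenvector of h₀, for n ≥ 1
  have kill : ∀ n : ℤ, 1 ≤ n → ∀ y : V, ((ρ.L 0 - h₀ • 1) ^ k) y = 0 → ρ.L (-n) y = 0 := by
    intro n hn y hy
    have hn0 : n ≠ 0 := by omega
    have hmem : ρ.L (-n) y ∈ Module.End.maxGenEigenspace (ρ.L 0) (h₀ - (n : ℂ)) := by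
      rw [Module.End.mem_maxGenEigenspace]
      refine ⟨k, ?_⟩
      have : ∀ j : ℕ, ((ρ.L 0 - (h₀ - (n:ℂ)) • 1) ^ j) * ρ.L (-n)
          = ρ.L (-n) * ((ρ.L 0 - h₀ • 1) ^ j) := by
        intro j
        induction j with
        | zero => simp
        | succ m ih =>
          rw [pow_succ', pow_succ', mul_assoc, ih, ← mul_assoc, key n hn0, mul_assoc]
      have := this k
      calc ((ρ.L 0 - (h₀ - (n:ℂ)) • 1) ^ k) (ρ.L (-n) y)
          = (((ρ.L 0 - (h₀ - (n:ℂ)) • 1) ^ k) * ρ.L (-n)) y := rfl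
        _ = (ρ.L (-n) * ((ρ.L 0 - h₀ • 1) ^ k)) y := by rw [this]
        _ = ρ.L (-n) (((ρ.L 0 - h₀ • 1) ^ k) y) := rfl
        _ = 0 := by rw [hy, map_zero]
    by_contra habs
    have hbot : Module.End.maxGenEigenspace (ρ.L 0) (h₀ - (n:ℂ)) ≠ ⊥ :=
      fun h => habs (by simpa [h] using hmem)
    have := h₀min _ hbot
    have : (n : ℝ) ≤ 0 := by
      have hre : (h₀ - (n:ℂ)).re = h₀.re - (n:ℝ) := by simp
      linarith [this, hre ▸ this]
    have : (1 : ℝ) ≤ (n : ℝ) := by exact_mod_cast hn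
    linarith
  -- find a genuine eigenvector: minimal power
  have hex : ∃ m : ℕ, ((ρ.L 0 - h₀ • 1) ^ m) x = 0 := ⟨k, hk⟩
  classical
  let m := Nat.find hex
  have hm : ((ρ.L 0 - h₀ • 1) ^ m) x = 0 := Nat.find_spec hex
  have hmpos : 0 < m := by
    rcases Nat.eq_zero_or_pos m with h0 | h0
    · exfalso; apply hx_ne; have := hm; rw [h0] at this; simpa using this
    · exact h0
  set v := ((ρ.L 0 - h₀ • 1) ^ (m - 1)) x with hv
  have hv_ne : v ≠ 0 := Nat.find_min hex (by omega)
  have hv_eig : (ρ.L 0 - h₀ • 1) v = 0 := by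
    have h1 : (ρ.L 0 - h₀ • 1) v = ((ρ.L 0 - h₀ • 1) ^ ((m - 1) + 1)) x := by
      rw [pow_succ', hv]; rfl
    rw [h1, show (m - 1) + 1 = m by omega, hm]
  have hv_k : ((ρ.L 0 - h₀ • 1) ^ k) v = 0 := by
    rcases Nat.eq_zero_or_pos k with h0 | h0
    · exfalso
      apply hx_ne
      have := hk; rw [h0] at this; simpa using this
    · have : ((ρ.L 0 - h₀ • 1) ^ k) v = ((ρ.L 0 - h₀ • 1) ^ (k-1)) ((ρ.L 0 - h₀ • 1) v) := by
        rw [show k = (k - 1) + 1 by omega, pow_succ]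
        rfl
      rw [this, hv_eig, map_zero]
  refine ⟨v, hv_ne, h₀, ?_, ?_, hC v⟩
  · intro n hn
    exact kill n hn v hv_k
  · have := hv_eig
    simp only [LinearMap.sub_apply, LinearMap.smul_apply, Module.End.one_apply] at this
    exact sub_eq_zero.mp this
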